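/- arXiv:1509.08039 — 9 statements merged into one kernel-verified Lean document; each statement's English description precedes it below -/
import Mathlib

section
/- Let f : Ω → Ω be injective with f(Ω) cofinite and f(Ω) ≠ Ω. Then for every surjective g : Ω → Ω, the disagreement set {ω : f ω ≠ g ω} is infinite; in particular f is not almost equal to any surjection. -/
variable {Ω : Type*}

def monoset (f : Ω → Ω) : Set Ω := {ω | f ⁻¹' {f ω} = {ω}}

def NearBijection (f : Ω → Ω) : Prop :=
  ∃ A B : Set Ω, Aᶜ.Finite ∧ Bᶜ.Finite ∧ Set.BijOn f A B

def AlmostEq (f g : Ω → Ω) : Prop := {ω | f ω ≠ g ω}.Finite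

noncomputable def ind (f : Ω → Ω) : ℤ :=
  (((monoset f)ᶜ.ncard : ℤ) - ((f '' (monoset f)ᶜ).ncard : ℤ)) - ((Set.range f)ᶜ.ncard : ℤ)

theorem stmt3 [Infinite Ω] (f : Ω → Ω) (hf : Function.Injective f)
    (h1 : (Set.range f)ᶜ.Finite) (h2 : Set.range f ≠ Set.univ)
    (g : Ω → Ω) (hg : Function.Surjective g) :
    {ω | f ω ≠ g ω}.Infinite := by
  by_contra h
  rw [Set.not_infinite] at h
  set S := {ω | f ω ≠ g ω} with hSdef
  -- the complement of f '' Sᶜ is covered by g '' S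
  have hsub : (f '' Sᶜ)ᶜ ⊆ g '' S := by
    intro x hx
    obtain ⟨ω, rfl⟩ := hg x
    by_cases hω : ω ∈ S
    · exact ⟨ω, hω, rfl⟩
    · exact absurd ⟨ω, hω, not_not.mp hω⟩ hx
  -- f '' S and (range f)ᶜ are disjoint subsets of (f '' Sᶜ)ᶜ
  have h3 : f '' S ∪ (Set.range f)ᶜ ⊆ (f '' Sᶜ)ᶜ := by
    rintro x (⟨ω, hω, rfl⟩ | hx)
    · rintro ⟨ω', hω', he⟩
      exact hω' (hf he ▸ hω)
    · rintro ⟨ω', _, rfl⟩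
      exact hx ⟨ω', rfl⟩
  have hdisj : Disjoint (f '' S) (Set.range f)ᶜ := by
    apply Set.disjoint_right.mpr
    rintro x hx ⟨ω, _, rfl⟩
    exact hx ⟨ω, rfl⟩
  have hgSfin : (g '' S).Finite := h.image g
  have hfin : ((f '' Sᶜ)ᶜ).Finite := hgSfin.subset hsub
  have hcard1 : (f '' S ∪ (Set.range f)ᶜ).ncard ≤ ((f '' Sᶜ)ᶜ).ncard :=
    Set.ncard_le_ncard h3 hfin
  have hcard2 : ((f '' Sᶜ)ᶜ).ncard ≤ (g '' S).ncard := Set.ncard_le_ncard hsub hgSfin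
  have hcard3 : (g '' S).ncard ≤ S.ncard := Set.ncard_image_le h
  have hunion : (f '' S ∪ (Set.range f)ᶜ).ncard = (f '' S).ncard + ((Set.range f)ᶜ).ncard :=
    Set.ncard_union_eq hdisj (h.image f) h1
  have himg : (f '' S).ncard = S.ncard := Set.ncard_image_of_injective S hf
  have hpos : 0 < ((Set.range f)ᶜ).ncard := by
    rw [Set.ncard_pos h1]
    rw [Set.nonempty_compl]
    exact h2
  omega
end

section
/- Let f : Ω → Ω be surjective with monoset Ω_f cofinite and Ω_f ≠ Ω. Then for every injective g : Ω → Ω, the disagreement set {ω : f ω ≠ g ω} is infinite; in particular f is not almost equal to any injection. -/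
variable {Ω : Type*}

theorem stmt4 [Infinite Ω] (f : Ω → Ω) (hf : Function.Surjective f)
    (h1 : (monoset f)ᶜ.Finite) (h2 : monoset f ≠ Set.univ)
    (g : Ω → Ω) (hg : Function.Injective g) :
    {ω | f ω ≠ g ω}.Infinite := by
  intro hD
  set D := {ω | f ω ≠ g ω} with hDdef
  set N := (monoset f)ᶜ with hNdef
  -- fibers meeting a non-mono point lie in N, so fibers are finite
  have fiber_sub : ∀ y : Ω, (f ⁻¹' {y}).Finite := by
    intro y
    rcases Set.eq_empty_or_nonempty (f ⁻¹' {y}) with h | ⟨x, hx⟩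
    · simp [h]
    · by_cases hx1 : f ⁻¹' {y} = {x}
      · simp [hx1]
      · have hsub : f ⁻¹' {y} ⊆ N := by
          intro z hz
          intro hzmono
          have : f ⁻¹' {f z} = {z} := hzmono
          have hzy : f z = y := hz
          rw [hzy] at this
          rw [this] at hx1 hx
          have : x = z := hx
          subst this
          exact hx1 rfl
        exact h1.subset hsub
  -- T : saturated finite set containing D and N
  set T := f ⁻¹' (f '' (D ∪ N)) with hTdef
  have hTfin : T.Finite := by
    have : T = ⋃ y ∈ f '' (D ∪ N), f ⁻¹' {y} := by
      ext x; simp only [hTdef, Set.mem_preimage, Set.mem_iUnion, Set.mem_image,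
        Set.mem_singleton_iff, Set.mem_union, exists_prop]
      constructor
      · rintro ⟨z, hz, he⟩; exact ⟨f z, ⟨z, hz, rfl⟩, he.symm⟩
      · rintro ⟨y, ⟨z, hz, rfl⟩, he⟩; exact ⟨z, hz, he.symm⟩
    rw [this]
    exact Set.Finite.biUnion ((hD.union h1).image f) fun y _ => fiber_sub y
  have hsubT : D ∪ N ⊆ T := Set.subset_preimage_image f (D ∪ N)
  have hfT : f '' T = f '' (D ∪ N) := Set.image_preimage_eq_of_subset (by
    intro y _; exact hf y)
  have hsat : f ⁻¹' (f '' T) = T := by rw [hfT]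
  -- g '' T ⊆ f '' T
  have hgT : g '' T ⊆ f '' T := by
    rintro _ ⟨x, hxT, rfl⟩
    obtain ⟨z, hz⟩ := hf (g x)
    have hzT : z ∈ T := by
      by_contra hzT
      have hzD : z ∉ D := fun h => hzT (hsubT (Or.inl h))
      have : f z = g z := not_not.mp hzD
      have hzx : z = x := hg (this ▸ hz)
      exact hzT (hzx ▸ hxT)
    exact ⟨z, hzT, hz⟩
  -- f not injective on T
  obtain ⟨a, ha⟩ : ∃ a, a ∉ monoset f := by
    by_contra h
    push_neg at h
    exact h2 (Set.eq_univ_of_forall h)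
  have haN : a ∈ N := ha
  have haT : a ∈ T := hsubT (Or.inr haN)
  obtain ⟨b, hbfib, hba⟩ : ∃ b, b ∈ f ⁻¹' {f a} ∧ b ≠ a := by
    by_contra h
    push_neg at h
    apply ha
    show f ⁻¹' {f a} = {a}
    ext z
    constructor
    · intro hz; exact h z hz
    · rintro rfl; exact rfl
  have hbT : b ∈ T := by
    show f b ∈ f '' (D ∪ N)
    exact ⟨a, Or.inr haN, hbfib.symm⟩
  -- cardinality contradiction
  have hfb : f b = f a := hbfib
  have himg : f '' T = f '' (T \ {b}) := by
    apply Set.Subset.antisymm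
    · rintro _ ⟨x, hxT, rfl⟩
      by_cases hxb : x = b
      · subst hxb
        exact ⟨a, ⟨haT, fun h => hba (Set.mem_singleton_iff.mp h).symm⟩, hfb.symm⟩
      · exact ⟨x, ⟨hxT, hxb⟩, rfl⟩
    · exact Set.image_mono (f := f) (Set.diff_subset)
  have h3 : (f '' T).ncard < T.ncard := by
    calc (f '' T).ncard = (f '' (T \ {b})).ncard := by rw [himg]
      _ ≤ (T \ {b}).ncard := Set.ncard_image_le (hTfin.diff)
      _ < T.ncard := Set.ncard_diff_singleton_lt_of_mem hbT hTfin
  have h4 : T.ncard ≤ (f '' T).ncard := by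
    calc T.ncard = (g '' T).ncard := (Set.ncard_image_of_injective T hg).symm
      _ ≤ (f '' T).ncard := Set.ncard_le_ncard hgT (hTfin.image f)
  omega
end

section
/- For a self-map f of an infinite set Ω, the monoset Ω_f is cofinite if and only if there exists a cofinite subset A ⊆ Ω on which f is injective. -/
variable {Ω : Type*}

theorem stmt5 [Infinite Ω] (f : Ω → Ω) :
    (monoset f)ᶜ.Finite ↔ ∃ A : Set Ω, Aᶜ.Finite ∧ Set.InjOn f A := by
  constructor
  · intro h
    refine ⟨monoset f, h, ?_⟩
    intro x hx y hy hxy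
    have : y ∈ f ⁻¹' {f x} := by simp [hxy]
    rw [hx] at this
    exact this.symm
  · rintro ⟨A, hA, hinj⟩
    have hsub : (monoset f)ᶜ ⊆ Aᶜ ∪ (A ∩ f ⁻¹' (f '' Aᶜ)) := by
      intro ω hω
      by_cases hωA : ω ∈ A
      · right
        refine ⟨hωA, ?_⟩
        -- ω not in monoset: ∃ ω' ≠ ω with f ω' = f ω
        simp only [Set.mem_compl_iff, monoset, Set.mem_setOf_eq] at hω
        have : ¬ (f ⁻¹' {f ω} ⊆ {ω}) := by
          intro hss
          exact hω (Set.Subset.antisymm hss (by simp [Set.singleton_subset_iff]))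
        obtain ⟨ω', hω'mem, hω'ne⟩ := Set.not_subset.mp this
        simp only [Set.mem_preimage, Set.mem_singleton_iff] at hω'mem hω'ne
        have hω'A : ω' ∉ A := fun hω'A => hω'ne (hinj hω'A hωA hω'mem)
        exact ⟨ω', hω'A, hω'mem⟩
      · left; exact hωA
    refine Set.Finite.subset (hA.union ?_) hsub
    refine Set.Finite.of_finite_image ?_ (hinj.mono Set.inter_subset_left)
    refine Set.Finite.subset (hA.image f) ?_
    rintro _ ⟨ω, ⟨_, hω2⟩, rfl⟩
    exact hω2
end

section
/- A self-map f of an infinite set Ω is a near-bijection if and only if both the monoset Ω_f and the range f(Ω) are cofinite. -/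
variable {Ω : Type*}

theorem stmt6 [Infinite Ω] (f : Ω → Ω) :
    NearBijection f ↔ (monoset f)ᶜ.Finite ∧ (Set.range f)ᶜ.Finite := by
  constructor
  · rintro ⟨A, B, hA, hB, hmaps, hinj, hsurj⟩
    constructor
    · -- (monoset f)ᶜ ⊆ (f⁻¹(f '' Aᶜ) ∩ A) ∪ Aᶜ
      have hsub : (monoset f)ᶜ ⊆ (f ⁻¹' (f '' Aᶜ) ∩ A) ∪ Aᶜ := by
        intro ω hω
        by_cases hωA : ω ∈ A
        · left
          refine ⟨?_, hωA⟩
          simp only [monoset, Set.mem_compl_iff, Set.mem_setOf_eq] at hω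
          have : ¬ f ⁻¹' {f ω} ⊆ {ω} := by
            intro h
            exact hω (le_antisymm h (by simp))
          obtain ⟨ω', hω', hne⟩ := Set.not_subset.mp this
          simp only [Set.mem_preimage, Set.mem_singleton_iff] at hω'
          simp only [Set.mem_singleton_iff] at hne
          have hω'A : ω' ∉ A := fun h => hne (hinj h hωA hω')
          exact ⟨ω', hω'A, hω'⟩
        · exact Or.inr hωA
      apply Set.Finite.subset _ hsub
      apply Set.Finite.union _ hA
      apply Set.Finite.of_finite_image (f := f)
      · exact (hA.image f).subset (by rintro _ ⟨x, ⟨hx, _⟩, rfl⟩; exact hx)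
      · exact hinj.mono (Set.inter_subset_right)
    · apply hB.subset
      intro x hx
      simp only [Set.mem_compl_iff, Set.mem_range, not_exists] at hx
      intro hxB
      obtain ⟨a, _, ha⟩ := hsurj hxB
      exact hx a ha
  · rintro ⟨hm, hr⟩
    refine ⟨monoset f, f '' monoset f, hm, ?_, ?_, ?_, Set.surjOn_image f _⟩
    · have : (f '' monoset f)ᶜ ⊆ f '' (monoset f)ᶜ ∪ (Set.range f)ᶜ := by
        intro x hx
        by_cases hxr : x ∈ Set.range f
        · obtain ⟨a, rfl⟩ := hxr
          left
          by_cases ha : a ∈ monoset f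
          · exact absurd (Set.mem_image_of_mem f ha) hx
          · exact Set.mem_image_of_mem f ha
        · exact Or.inr hxr
      exact ((hm.image f).union hr).subset this
    · exact Set.mapsTo_image f _
    · intro a ha b hb hfab
      have : b ∈ f ⁻¹' {f a} := by simp [hfab]
      rw [ha] at this
      exact this.symm
end

section
/- If Ω is a finite set and f : Ω → Ω is any map, then |Ω \ Ω_f| − |f(Ω \ Ω_f)| = |Ω \ f(Ω)|. -/
variable {Ω : Type*}

theorem stmt12 {Ω : Type*} [Finite Ω] (f : Ω → Ω) :
    (((monoset f)ᶜ.ncard : ℤ) - ((f '' (monoset f)ᶜ).ncard : ℤ)) =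
      ((Set.range f)ᶜ.ncard : ℤ) := by
  classical
  set M := monoset f with hM
  have hmem : ∀ a, a ∈ M ↔ f ⁻¹' {f a} = {a} := fun a => Iff.rfl
  have hinj : Set.InjOn f M := by
    intro a ha b hb hab
    have hb' : b ∈ f ⁻¹' {f a} := by simp [hab]
    rw [(hmem a).1 ha] at hb'
    exact hb'.symm
  have hdisj : Disjoint (f '' M) (f '' Mᶜ) := by
    rw [Set.disjoint_left]
    rintro x ⟨a, ha, rfl⟩ ⟨b, hb, hfb⟩
    have : b ∈ f ⁻¹' {f a} := by simp [hfb]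
    rw [(hmem a).1 ha] at this
    exact hb (Set.mem_singleton_iff.1 this ▸ ha)
  have hrange : Set.range f = f '' M ∪ f '' Mᶜ := by
    rw [← Set.image_union, Set.union_compl_self, Set.image_univ]
  have h1 : (Set.range f).ncard = M.ncard + (f '' Mᶜ).ncard := by
    rw [hrange, Set.ncard_union_eq hdisj (Set.toFinite _) (Set.toFinite _),
      Set.ncard_image_of_injOn hinj]
  have h2 : M.ncard + Mᶜ.ncard = Nat.card Ω := Set.ncard_add_ncard_compl M
  have h3 : (Set.range f).ncard + (Set.range f)ᶜ.ncard = Nat.card Ω :=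
    Set.ncard_add_ncard_compl _
  have hle : (f '' Mᶜ).ncard ≤ Mᶜ.ncard := Set.ncard_image_le (Set.toFinite _)
  omega
end

section
/- If f : Ω → Ω differs from the identity map on only a finite set, then |Ω \ Ω_f| − |f(Ω \ Ω_f)| = |Ω \ f(Ω)| (all three sets being finite). -/
variable {Ω : Type*}

theorem stmt13 [Infinite Ω] (f : Ω → Ω) (h : {ω | f ω ≠ ω}.Finite) :
    (monoset f)ᶜ.Finite ∧ (f '' (monoset f)ᶜ).Finite ∧ (Set.range f)ᶜ.Finite ∧
    (((monoset f)ᶜ.ncard : ℤ) - ((f '' (monoset f)ᶜ).ncard : ℤ)) =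
      ((Set.range f)ᶜ.ncard : ℤ) := by
  classical
  set S : Set Ω := {ω | f ω ≠ ω} with hSdef
  set U : Set Ω := S ∪ f '' S with hUdef
  have hU : U.Finite := h.union (h.image f)
  -- U is f-saturated
  have hmemU : ∀ ω, f ω ∈ U ↔ ω ∈ U := by
    intro ω
    constructor
    · intro hf
      by_contra hω
      have hfix : f ω = ω := by
        by_contra hne
        exact hω (Or.inl hne)
      rw [hfix] at hf; exact hω hf
    · intro hω
      rcases hω with hω | hω
      · exact Or.inr ⟨ω, hω, rfl⟩
      · by_cases hfix : f ω = ω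
        · rw [hfix]; exact Or.inr hω
        · exact Or.inr ⟨ω, hfix, rfl⟩
  -- (monoset f)ᶜ ⊆ U
  have hC : (monoset f)ᶜ ⊆ U := by
    intro ω hω
    by_cases hfix : f ω = ω
    swap
    · exact Or.inl hfix
    simp only [monoset, Set.mem_compl_iff, Set.mem_setOf_eq] at hω
    have hex : ∃ ω', f ω' = f ω ∧ ω' ≠ ω := by
      by_contra hno
      push_neg at hno
      apply hω
      ext x
      simp only [Set.mem_preimage, Set.mem_singleton_iff]
      exact ⟨fun hx => hno x hx, fun hx => by rw [hx]⟩
    obtain ⟨ω', hω', hne⟩ := hex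
    have hω'S : ω' ∈ S := by
      simp only [hSdef, Set.mem_setOf_eq]
      rw [hω', hfix]; exact hne.symm
    exact Or.inr ⟨ω', hω'S, by rw [hω', hfix]⟩
  -- (range f)ᶜ ⊆ U
  have hR : (Set.range f)ᶜ ⊆ U := by
    intro ω hω
    left
    intro hfix
    exact hω ⟨ω, hfix⟩
  have hCfin : (monoset f)ᶜ.Finite := hU.subset hC
  have hfCfin : (f '' (monoset f)ᶜ).Finite := hCfin.image f
  have hRfin : (Set.range f)ᶜ.Finite := hU.subset hR
  refine ⟨hCfin, hfCfin, hRfin, ?_⟩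
  -- injectivity on monoset
  have hinj : Set.InjOn f (monoset f) := by
    intro x hx y hy hxy
    have : y ∈ f ⁻¹' {f x} := by simp [hxy]
    rw [hx] at this
    exact this.symm
  -- f''M and f''C disjoint
  have hdisj : Disjoint (f '' monoset f) (f '' (monoset f)ᶜ) := by
    rw [Set.disjoint_left]
    rintro _ ⟨x, hx, rfl⟩ ⟨y, hy, hxy⟩
    have : y ∈ f ⁻¹' {f x} := by simp [hxy]
    rw [hx] at this
    exact hy (this ▸ hx)
  set M' : Set Ω := monoset f ∩ U with hM'def
  have hM'fin : M'.Finite := hU.subset Set.inter_subset_right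
  -- f '' M' = f '' (monoset f) ∩ U
  have himg : f '' M' = f '' monoset f ∩ U := by
    ext x
    constructor
    · rintro ⟨y, ⟨hyM, hyU⟩, rfl⟩
      exact ⟨⟨y, hyM, rfl⟩, (hmemU y).2 hyU⟩
    · rintro ⟨⟨y, hyM, rfl⟩, hxU⟩
      exact ⟨y, ⟨hyM, (hmemU y).1 hxU⟩, rfl⟩
  -- U = M' ∪ Cᶜ partition
  have hU1 : U = M' ∪ (monoset f)ᶜ := by
    ext x
    constructor
    · intro hx
      by_cases hxM : x ∈ monoset f
      · exact Or.inl ⟨hxM, hx⟩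
      · exact Or.inr hxM
    · rintro (⟨_, hx⟩ | hx)
      · exact hx
      · exact hC hx
  have hd1 : Disjoint M' ((monoset f)ᶜ) := by
    rw [Set.disjoint_left]
    rintro x ⟨hxM, _⟩ hxC
    exact hxC hxM
  -- U = f''M' ∪ f''Cᶜ ∪ rangeᶜ partition
  have hfC : f '' (monoset f)ᶜ ⊆ U := by
    rintro _ ⟨y, hy, rfl⟩
    exact (hmemU y).2 (hC hy)
  have hU2 : U = (f '' M' ∪ f '' (monoset f)ᶜ) ∪ (Set.range f)ᶜ := by
    ext x
    constructor
    · intro hx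
      by_cases hxR : x ∈ Set.range f
      · obtain ⟨y, rfl⟩ := hxR
        by_cases hyM : y ∈ monoset f
        · exact Or.inl (Or.inl ⟨y, ⟨hyM, (hmemU y).1 hx⟩, rfl⟩)
        · exact Or.inl (Or.inr ⟨y, hyM, rfl⟩)
      · exact Or.inr hxR
    · rintro ((⟨y, ⟨_, hyU⟩, rfl⟩ | hx) | hx)
      · exact (hmemU y).2 hyU
      · exact hfC hx
      · exact hR hx
  have hd2 : Disjoint (f '' M') (f '' (monoset f)ᶜ) :=
    hdisj.mono_left (by rw [himg]; exact Set.inter_subset_left)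
  have hd3 : Disjoint (f '' M' ∪ f '' (monoset f)ᶜ) ((Set.range f)ᶜ) := by
    rw [Set.disjoint_left]
    rintro x hx hxR
    apply hxR
    rcases hx with ⟨y, _, rfl⟩ | ⟨y, _, rfl⟩ <;> exact ⟨y, rfl⟩
  -- cardinality computations
  have hcard1 : U.ncard = M'.ncard + (monoset f)ᶜ.ncard := by
    rw [hU1, Set.ncard_union_eq hd1 hM'fin hCfin]
  have hinjM' : Set.InjOn f M' := hinj.mono Set.inter_subset_left
  have hcardM' : (f '' M').ncard = M'.ncard := Set.ncard_image_of_injOn hinjM'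
  have hcard2 : U.ncard = M'.ncard + (f '' (monoset f)ᶜ).ncard + (Set.range f)ᶜ.ncard := by
    rw [hU2, Set.ncard_union_eq hd3 ((hM'fin.image f).union hfCfin) hRfin,
      Set.ncard_union_eq hd2 (hM'fin.image f) hfCfin, hcardM']
  omega
end

section
/- If f : Ω → Ω is almost equal to a bijection, then |Ω \ Ω_f| − |f(Ω \ Ω_f)| = |Ω \ f(Ω)|; equivalently, the index ind(f) = (|Ω \ Ω_f| − |f(Ω \ Ω_f)|) − |Ω \ f(Ω)| vanishes. -/
variable {Ω : Type*}

theorem stmt16 [Infinite Ω] (f g : Ω → Ω) (hg : Function.Bijective g)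
    (h : AlmostEq f g) :
    (((monoset f)ᶜ.ncard : ℤ) - ((f '' (monoset f)ᶜ).ncard : ℤ)) =
      ((Set.range f)ᶜ.ncard : ℤ) ∧ ind f = 0 := by
  classical
  set M := monoset f with hM
  set D := {ω | f ω ≠ g ω} with hDdef
  have hD : D.Finite := h
  -- f is injective on M
  have hinj : Set.InjOn f M := by
    intro a ha b hb hab
    have h1 : a ∈ f ⁻¹' {f b} := by simp [hab]
    rw [hb] at h1
    exact h1
  -- images of M and Mᶜ are disjoint
  have hdis : ∀ a ∈ M, ∀ b, b ∉ M → f a ≠ f b := by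
    intro a ha b hb hab
    have h1 : b ∈ f ⁻¹' {f a} := by simp [hab]
    rw [ha] at h1
    exact hb (h1 ▸ ha)
  -- Mᶜ is finite
  have hMc : Mᶜ.Finite := by
    apply Set.Finite.subset (hD.union ((hD.image f).preimage
      (Function.Injective.injOn hg.injective)))
    intro ω hω
    have hsub : ({ω} : Set Ω) ⊆ f ⁻¹' {f ω} := by
      intro x hx; simp only [Set.mem_singleton_iff] at hx; simp [hx]
    obtain ⟨b, hbmem, hbne⟩ := Set.exists_of_ssubset (hsub.ssubset_of_ne (Ne.symm hω))
    have hfb : f b = f ω := hbmem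
    by_cases hωD : ω ∈ D
    · exact Or.inl hωD
    · have hfgω : f ω = g ω := not_not.mp hωD
      have hbD : b ∈ D := by
        by_contra hbD
        have : g b = g ω := by
          rw [← not_not.mp hbD, hfb, hfgω]
        exact (hbne (hg.injective this))
      right
      show g ω ∈ f '' D
      exact ⟨b, hbD, by rw [hfb, hfgω]⟩
  -- complement of range f is small
  have hR : (Set.range f)ᶜ ⊆ g '' D := by
    intro y hy
    obtain ⟨x, hx⟩ := hg.surjective y
    refine ⟨x, ?_, hx⟩
    intro hfx
    exact hy ⟨x, by rw [hfx, hx]⟩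
  have hRfin : (Set.range f)ᶜ.Finite := (hD.image g).subset hR
  -- decomposition of (f '' M)ᶜ
  have hE : (f '' M)ᶜ = f '' Mᶜ ∪ (Set.range f)ᶜ := by
    ext y
    constructor
    · intro hy
      by_cases hyr : y ∈ Set.range f
      · obtain ⟨x, hx⟩ := hyr
        left
        refine ⟨x, ?_, hx⟩
        intro hxM
        exact hy ⟨x, hxM, hx⟩
      · exact Or.inr hyr
    · rintro (⟨x, hx, rfl⟩ | hy)
      · intro ⟨a, haM, ha⟩
        exact (hdis a haM x hx) ha
      · intro hy'
        obtain ⟨x, _, hx⟩ := hy'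
        exact hy ⟨x, hx⟩
  have hEfin : (f '' M)ᶜ.Finite := by
    rw [hE]; exact (hMc.image f).union hRfin
  have hEdisj : Disjoint (f '' Mᶜ) (Set.range f)ᶜ := by
    rw [Set.disjoint_right]
    rintro y hy ⟨x, hx, rfl⟩
    exact hy ⟨x, rfl⟩
  have eq2 : (f '' M)ᶜ.ncard = (f '' Mᶜ).ncard + (Set.range f)ᶜ.ncard := by
    rw [hE, Set.ncard_union_eq hEdisj (hMc.image f) hRfin]
  -- comparison via g
  have hfgeq : f '' (M \ D) = g '' (M \ D) := by
    apply Set.image_congr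
    intro x hx
    exact not_not.mp hx.2
  have hcompl : (g '' (M \ D))ᶜ = g '' (Mᶜ ∪ D) := by
    rw [← Set.image_compl_eq hg]
    rw [Set.diff_eq, Set.compl_inter, compl_compl]
  -- (g '' (M \ D))ᶜ = (f '' M)ᶜ ∪ f '' (M ∩ D), disjointly
  have hE2 : (g '' (M \ D))ᶜ = (f '' M)ᶜ ∪ f '' (M ∩ D) := by
    rw [← hfgeq]
    ext y
    constructor
    · intro hy
      by_cases hyM : y ∈ f '' M
      · obtain ⟨x, hxM, rfl⟩ := hyM
        right
        refine ⟨x, ⟨hxM, ?_⟩, rfl⟩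
        intro hxD
        exact hy ⟨x, ⟨hxM, not_not.mpr hxD⟩, rfl⟩
      · exact Or.inl hyM
    · rintro (hy | ⟨x, ⟨hxM, hxD⟩, rfl⟩)
      · intro ⟨x, hx, hfx⟩
        exact hy ⟨x, hx.1, hfx⟩
      · rintro ⟨a, ⟨haM, haD⟩, ha⟩
        have : a = x := hinj haM hxM ha
        exact haD (this ▸ hxD)
  have hE2disj : Disjoint (f '' M)ᶜ (f '' (M ∩ D)) := by
    rw [Set.disjoint_left]
    rintro y hy ⟨x, hx, rfl⟩
    exact hy ⟨x, hx.1, rfl⟩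
  have hMDfin : (f '' (M ∩ D)).Finite := (hD.inter_of_right M).image f
  have eq1 : (g '' (Mᶜ ∪ D)).ncard = (f '' M)ᶜ.ncard + (f '' (M ∩ D)).ncard := by
    rw [← hcompl, hE2, Set.ncard_union_eq hE2disj hEfin hMDfin]
  have eqg : (g '' (Mᶜ ∪ D)).ncard = (Mᶜ ∪ D).ncard :=
    Set.ncard_image_of_injective _ hg.injective
  have equnion : (Mᶜ ∪ D).ncard = Mᶜ.ncard + (M ∩ D).ncard := by
    have : Mᶜ ∪ D = Mᶜ ∪ (M ∩ D) := by
      ext x; by_cases hx : x ∈ M <;> simp [hx]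
    rw [this, Set.ncard_union_eq _ hMc (hD.inter_of_right M)]
    rw [Set.disjoint_right]
    rintro x hx
    exact not_not.mpr hx.1
  have eqinj : (f '' (M ∩ D)).ncard = (M ∩ D).ncard :=
    Set.ncard_image_of_injOn (hinj.mono Set.inter_subset_left)
  have key : Mᶜ.ncard = (f '' Mᶜ).ncard + (Set.range f)ᶜ.ncard := by
    have h1 := eq1
    rw [eqg, equnion, eqinj] at h1
    omega
  constructor
  · push_cast [key]; ring
  · unfold ind
    rw [← hM]
    push_cast [key]; ring
end

section
/- A near-bijection f : Ω → Ω is almost equal to a bijection if and only if ind(f) = 0, where ind(f) = (|Ω \ Ω_f| − |f(Ω \ Ω_f)|) − |Ω \ f(Ω)|. -/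
variable {Ω : Type*}

namespace Stmt17Aux

lemma mem_monoset_iff {f : Ω → Ω} {x : Ω} : x ∈ monoset f ↔ ∀ y, f y = f x → y = x := by
  constructor
  · intro h y hy
    have hmem : y ∈ f ⁻¹' {f x} := hy
    rw [h] at hmem
    exact hmem
  · intro h
    ext y
    simp only [Set.mem_preimage, Set.mem_singleton_iff]
    exact ⟨h y, fun hy => hy ▸ rfl⟩

lemma monoset_injOn (f : Ω → Ω) : Set.InjOn f (monoset f) :=
  fun x _ y hy h => (mem_monoset_iff.mp hy x h)

lemma compl_image_mono (f : Ω → Ω) :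
    (f '' monoset f)ᶜ = (f '' (monoset f)ᶜ) ∪ (Set.range f)ᶜ := by
  ext z
  constructor
  · intro hz
    by_cases h : z ∈ Set.range f
    · obtain ⟨y, rfl⟩ := h
      exact Or.inl ⟨y, fun hy => hz ⟨y, hy, rfl⟩, rfl⟩
    · exact Or.inr h
  · rintro (⟨y, hy, rfl⟩ | h)
    · rintro ⟨x, hx, hxy⟩
      exact hy ((mem_monoset_iff.mp hx y hxy.symm) ▸ hx)
    · rintro ⟨x, _, hx⟩
      exact h ⟨x, hx⟩

lemma finite_compl_monoset (f : Ω → Ω) (hf : NearBijection f) : (monoset f)ᶜ.Finite := by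
  obtain ⟨A, B, hA, _, hbij⟩ := hf
  have hE : {x | x ∈ A ∧ f x ∈ f '' Aᶜ}.Finite := by
    apply Set.Finite.of_finite_image _ (hbij.injOn.mono (fun x hx => hx.1))
    exact (hA.image f).subset (fun z => by rintro ⟨x, hx, rfl⟩; exact hx.2)
  refine (hA.union hE).subset ?_
  intro x hx
  by_cases hxA : x ∈ A
  · right
    have hne : ¬ ∀ y, f y = f x → y = x := fun h => hx (mem_monoset_iff.mpr h)
    push_neg at hne
    obtain ⟨y, hyx, hyne⟩ := hne
    refine ⟨hxA, ⟨y, ?_, hyx⟩⟩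
    intro hyA
    exact hyne (hbij.injOn hyA hxA hyx)
  · exact Or.inl hxA

lemma finite_compl_range (f : Ω → Ω) (hf : NearBijection f) : (Set.range f)ᶜ.Finite := by
  obtain ⟨A, _, _, hB, hbij⟩ := hf
  refine hB.subset (fun z hz => ?_)
  intro hzB
  obtain ⟨a, _, hfa⟩ := hbij.surjOn hzB
  exact hz ⟨a, hfa⟩

lemma finite_compl_image (f : Ω → Ω) (hf : NearBijection f) : (f '' monoset f)ᶜ.Finite := by
  rw [compl_image_mono]
  exact ((finite_compl_monoset f hf).image f).union (finite_compl_range f hf)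

lemma ind_eq_zero_iff (f : Ω → Ω) (hf : NearBijection f) :
    ind f = 0 ↔ (monoset f)ᶜ.ncard = ((f '' monoset f)ᶜ).ncard := by
  have h1 := finite_compl_monoset f hf
  have h2 := finite_compl_range f hf
  have h3 : (f '' (monoset f)ᶜ).Finite := h1.image f
  have hdisj : Disjoint (f '' (monoset f)ᶜ) (Set.range f)ᶜ := by
    rw [Set.disjoint_left]
    rintro z ⟨x, _, hx⟩ h
    exact h ⟨x, hx⟩
  rw [compl_image_mono, Set.ncard_union_eq hdisj h3 h2]
  unfold ind
  omega

end Stmt17Aux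

open Stmt17Aux in
theorem stmt17 [Infinite Ω] (f : Ω → Ω) (hf : NearBijection f) :
    (∃ g : Ω → Ω, Function.Bijective g ∧ AlmostEq f g) ↔ ind f = 0 := by
  rw [ind_eq_zero_iff f hf]
  have hM : (monoset f)ᶜ.Finite := finite_compl_monoset f hf
  have hI : ((f '' monoset f)ᶜ).Finite := finite_compl_image f hf
  constructor
  · rintro ⟨g, hgbij, hae⟩
    set M := monoset f with hMdef
    set F : Set Ω := Mᶜ ∪ {x | f x ≠ g x} with hFdef
    have hF : F.Finite := hM.union hae
    have hFcM : Fᶜ ⊆ M := fun x hx => not_not.mp (fun h => hx (Or.inl h))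
    have hagree : ∀ x ∈ Fᶜ, f x = g x := fun x hx => not_not.mp (fun h => hx (Or.inr h))
    have h2 : (f '' Fᶜ)ᶜ = g '' F := by
      rw [Set.image_congr hagree, ← Set.image_compl_eq hgbij, compl_compl]
    have hsub : f '' (M ∩ F) ⊆ (f '' Fᶜ)ᶜ := by
      rintro z ⟨a, ⟨haM, haF⟩, rfl⟩ ⟨b, hb, hba⟩
      have : b = a := monoset_injOn f (hFcM hb) haM hba
      exact hb (this ▸ haF)
    have hMeq : M = Fᶜ ∪ (M ∩ F) := by
      ext x
      constructor
      · intro hx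
        by_cases h : x ∈ F
        · exact Or.inr ⟨hx, h⟩
        · exact Or.inl h
      · rintro (h | ⟨h, _⟩)
        · exact hFcM h
        · exact h
    have himg : f '' M = f '' Fᶜ ∪ f '' (M ∩ F) := by
      conv_lhs => rw [hMeq]
      rw [Set.image_union]
    have hcompl : (f '' M)ᶜ = (g '' F) \ f '' (M ∩ F) := by
      rw [himg, Set.compl_union, ← h2, Set.diff_eq]
    have hcard1 : ((f '' M)ᶜ).ncard = (g '' F).ncard - (f '' (M ∩ F)).ncard := by
      rw [hcompl]
      exact Set.ncard_diff (h2 ▸ hsub) ((hF.inter_of_right M).image f)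
    have hgF : (g '' F).ncard = F.ncard := Set.ncard_image_of_injective F hgbij.injective
    have hfMF : (f '' (M ∩ F)).ncard = (M ∩ F).ncard :=
      Set.ncard_image_of_injOn ((monoset_injOn f).mono Set.inter_subset_left)
    have hFsplit : F.ncard = Mᶜ.ncard + (M ∩ F).ncard := by
      have hFeq : F = Mᶜ ∪ (M ∩ F) := by
        ext x
        constructor
        · intro hx
          by_cases h : x ∈ M
          · exact Or.inr ⟨h, hx⟩
          · exact Or.inl h
        · rintro (h | ⟨_, h⟩)
          · exact Or.inl h
          · exact h
      conv_lhs => rw [hFeq]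
      refine Set.ncard_union_eq ?_ hM (hF.inter_of_right M)
      exact Set.disjoint_left.mpr (fun x hx ⟨hxM, _⟩ => hx hxM)
    have hle : (f '' (M ∩ F)).ncard ≤ (g '' F).ncard :=
      Set.ncard_le_ncard (h2 ▸ hsub) (hF.image g)
    omega
  · intro hcard
    have hcard' : (monoset f)ᶜ.encard = ((f '' monoset f)ᶜ).encard := by
      rw [← hM.cast_ncard_eq, ← hI.cast_ncard_eq, hcard]
    obtain ⟨e, hebij⟩ := hM.exists_bijOn_of_encard_eq hcard'
    classical
    refine ⟨fun x => if x ∈ monoset f then f x else e x, ⟨?_, ?_⟩, ?_⟩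
    · intro a b hab
      by_cases ha : a ∈ monoset f <;> by_cases hb : b ∈ monoset f <;>
        simp only [ha, hb, if_pos, if_neg, if_true, if_false] at hab
      · exact monoset_injOn f ha hb hab
      · have hm : e b ∈ f '' monoset f := ⟨a, ha, hab⟩
        exact absurd hm (hebij.mapsTo hb)
      · have hm : e a ∈ f '' monoset f := ⟨b, hb, hab.symm⟩
        exact absurd hm (hebij.mapsTo ha)
      · exact hebij.injOn ha hb hab
    · intro z
      by_cases hz : z ∈ f '' monoset f
      · obtain ⟨x, hx, rfl⟩ := hz
        exact ⟨x, if_pos hx⟩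
      · obtain ⟨x, hx, rfl⟩ := hebij.surjOn hz
        exact ⟨x, if_neg hx⟩
    · refine hM.subset (fun x hx => ?_)
      intro hxM
      exact hx (by simp [if_pos hxM])
end

section
/- If f, g : Ω → Ω are near-bijections with f almost equal to g, then ind(f) = ind(g): the index is invariant under modification on a finite set. -/
variable {Ω : Type*}

lemma eq_of_mem_monoset (f : Ω → Ω) {x y : Ω} (hx : x ∈ monoset f) (hy : f y = f x) :
    y = x := by
  have hmem : y ∈ f ⁻¹' {f x} := by simpa using hy
  rw [hx] at hmem
  exact hmem

lemma monoset_compl_finite (f : Ω → Ω) (hf : NearBijection f) : (monoset f)ᶜ.Finite := by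
  obtain ⟨A, B, hA, hB, hbij⟩ := hf
  have hfin : (A ∩ f ⁻¹' (f '' Aᶜ)).Finite := by
    apply Set.Finite.of_finite_image _ (hbij.injOn.mono Set.inter_subset_left)
    exact (hA.image f).subset (by rintro y ⟨x, ⟨-, hx⟩, rfl⟩; exact hx)
  apply (hA.union hfin).subset
  intro x hx
  by_cases hxA : x ∈ A
  · right
    refine ⟨hxA, ?_⟩
    by_contra hxp
    apply hx
    show f ⁻¹' {f x} = {x}
    apply Set.eq_singleton_iff_unique_mem.mpr
    refine ⟨rfl, ?_⟩
    intro y hy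
    simp only [Set.mem_preimage, Set.mem_singleton_iff] at hy
    have hyA : y ∈ A := by
      by_contra hyA
      exact hxp ⟨y, hyA, hy⟩
    exact hbij.injOn hyA hxA hy
  · exact Or.inl hxA

lemma range_compl_finite (f : Ω → Ω) (hf : NearBijection f) : (Set.range f)ᶜ.Finite := by
  obtain ⟨A, B, hA, hB, hbij⟩ := hf
  apply hB.subset
  intro y hy
  simp only [Set.mem_compl_iff] at hy ⊢
  intro hyB
  obtain ⟨x, hx, rfl⟩ := hbij.surjOn hyB
  exact hy ⟨x, rfl⟩

lemma key (f : Ω → Ω) (S : Set Ω) (hS : S.Finite) (hMS : (monoset f)ᶜ ⊆ S) :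
    (S.ncard : ℤ) - ((f '' S).ncard : ℤ)
      = ((monoset f)ᶜ.ncard : ℤ) - ((f '' (monoset f)ᶜ).ncard : ℤ) := by
  set M := monoset f with hM
  set C := Mᶜ with hC
  set A := S ∩ M with hA
  have hSdecomp : S = C ∪ A := by
    ext x
    constructor
    · intro hx
      by_cases hxM : x ∈ M
      · exact Or.inr ⟨hx, hxM⟩
      · exact Or.inl hxM
    · rintro (hx | hx)
      · exact hMS hx
      · exact hx.1
  have hdisj : Disjoint C A := by
    rw [Set.disjoint_iff]
    rintro x ⟨hxC, hxA⟩
    exact hxC hxA.2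
  have hCfin : C.Finite := hS.subset hMS
  have hAfin : A.Finite := hS.subset Set.inter_subset_left
  have hinjA : Set.InjOn f A := by
    intro a ha b hb hab
    exact (eq_of_mem_monoset f hb.2 hab).symm ▸ rfl
  have himdisj : Disjoint (f '' C) (f '' A) := by
    rw [Set.disjoint_iff]
    rintro y ⟨⟨c, hc, rfl⟩, ⟨a, ha, hfa⟩⟩
    exact hc (eq_of_mem_monoset f ha.2 hfa.symm ▸ ha.2)
  have h1 : S.ncard = C.ncard + A.ncard := by
    rw [hSdecomp]; exact Set.ncard_union_eq hdisj hCfin hAfin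
  have h2 : (f '' S).ncard = (f '' C).ncard + A.ncard := by
    rw [hSdecomp, Set.image_union,
      Set.ncard_union_eq himdisj (hCfin.image f) (hAfin.image f),
      Set.ncard_image_of_injOn hinjA]
  rw [h1, h2]; push_cast; ring

lemma compl_image_compl (f : Ω → Ω) (S : Set Ω) (hMS : (monoset f)ᶜ ⊆ S) :
    (f '' Sᶜ)ᶜ = f '' S ∪ (Set.range f)ᶜ := by
  ext y
  simp only [Set.mem_compl_iff, Set.mem_union, Set.mem_image, Set.mem_range]
  constructor
  · intro hy
    by_cases hr : ∃ x, f x = y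
    · obtain ⟨x, rfl⟩ := hr
      left
      refine ⟨x, ?_, rfl⟩
      by_contra hxS
      exact hy ⟨x, hxS, rfl⟩
    · exact Or.inr hr
  · rintro (⟨s, hs, rfl⟩ | hr) ⟨x, hx, hfx⟩
    · -- x ∉ S, f x = f s, s ∈ S; x ∈ monoset f so s = x ∈ Sᶜ, contra
      have hxM : x ∈ monoset f := by
        by_contra hxM
        exact hx (hMS hxM)
      exact hx (eq_of_mem_monoset f hxM hfx.symm ▸ hs)
    · exact hr ⟨x, hfx⟩

lemma ind_eq (f : Ω → Ω) (S : Set Ω) (hS : S.Finite) (hMS : (monoset f)ᶜ ⊆ S)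
    (hR : (Set.range f)ᶜ.Finite) :
    ind f = (S.ncard : ℤ) - (((f '' Sᶜ)ᶜ).ncard : ℤ) := by
  have hkey := key f S hS hMS
  have hcompl := compl_image_compl f S hMS
  have hdisj : Disjoint (f '' S) (Set.range f)ᶜ := by
    rw [Set.disjoint_iff]
    rintro y ⟨⟨x, -, rfl⟩, hy⟩
    exact hy ⟨x, rfl⟩
  have hnc : ((f '' Sᶜ)ᶜ).ncard = (f '' S).ncard + (Set.range f)ᶜ.ncard := by
    rw [hcompl]; exact Set.ncard_union_eq hdisj (hS.image f) hR
  rw [ind, ← hkey, hnc]; push_cast; ring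

theorem stmt19 [Infinite Ω] (f g : Ω → Ω)
    (hf : NearBijection f) (hg : NearBijection g) (h : AlmostEq f g) :
    ind f = ind g := by
  set S : Set Ω := (monoset f)ᶜ ∪ (monoset g)ᶜ ∪ {ω | f ω ≠ g ω} with hSdef
  have hSfin : S.Finite :=
    ((monoset_compl_finite f hf).union (monoset_compl_finite g hg)).union h
  have hMf : (monoset f)ᶜ ⊆ S := fun x hx => Or.inl (Or.inl hx)
  have hMg : (monoset g)ᶜ ⊆ S := fun x hx => Or.inl (Or.inr hx)
  have himg : f '' Sᶜ = g '' Sᶜ := by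
    apply Set.image_congr
    intro x hx
    by_contra hne
    exact hx (Or.inr hne)
  rw [ind_eq f S hSfin hMf (range_compl_finite f hf),
    ind_eq g S hSfin hMg (range_compl_finite g hg), himg]
end
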